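/- Let Γ ⊂ ℂ be a lattice and for integers m, n with m + n > 2 define the Eisenstein–Kronecker series E_{m,n}(z) = ∑_{γ ∈ Γ \ {0}} χ_z(γ)/(conj(γ)^m · γ^n) for z ∈ ℂ \ Γ, where χ_z(γ) = exp((γ·conj(z) − conj(γ)·z)/A). Then, as a function of z (smooth in the real-variable sense), E_{m,n} satisfies the partial differential equations ∂_z E_{m,n}(z) = −E_{m−1,n}(z)/A and ∂_{z̄} E_{m,n}(z) = E_{m,n−1}(z)/A, whenever m + n > 3 (so all occurring series converge absolutely and term-by-term differentiation is valid). -/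

import Mathlib

open Complex

noncomputable def Lmap (A : ℝ) (g : ℂ) : ℂ →L[ℝ] ℂ :=
  ((g / A) • (Complex.conjCLE : ℂ ≃L[ℝ] ℂ).toContinuousLinearMap) -
    ((starRingEnd ℂ g / A) • (ContinuousLinearMap.id ℝ ℂ))

lemma Lmap_apply (A : ℝ) (g v : ℂ) :
    Lmap A g v = (g * (starRingEnd ℂ) v - (starRingEnd ℂ) g * v) / (A : ℂ) := by
  simp [Lmap, Complex.conjCLE_apply, smul_eq_mul]
  ring

lemma Lmap_norm_le (A : ℝ) (hA : 0 ≤ A) (g : ℂ) : ‖Lmap A g‖ ≤ 2 * ‖g‖ / A := by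
  refine ContinuousLinearMap.opNorm_le_bound _ (by positivity) fun v => ?_
  rw [Lmap_apply]
  rcases eq_or_lt_of_le hA with h | h
  · simp [← h]
  calc ‖(g * (starRingEnd ℂ) v - (starRingEnd ℂ) g * v) / (A : ℂ)‖
      = ‖g * (starRingEnd ℂ) v - (starRingEnd ℂ) g * v‖ / A := by
        rw [norm_div, Complex.norm_real, Real.norm_eq_abs, abs_of_pos h]
    _ ≤ (‖g * (starRingEnd ℂ) v‖ + ‖(starRingEnd ℂ) g * v‖) / A := by
        gcongr; exact norm_sub_le _ _
    _ = 2 * ‖g‖ / A * ‖v‖ := by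
        simp [map_mul]
        ring

noncomputable def term (A : ℝ) (m n : ℤ) (g : ℂ) (w : ℂ) : ℂ :=
  if g = 0 then 0 else
    Complex.exp ((g * (starRingEnd ℂ) w - (starRingEnd ℂ) g * w) / (A : ℂ)) /
      (((starRingEnd ℂ) g) ^ m * g ^ n)

lemma hasFDerivAt_term (A : ℝ) (m n : ℤ) (g : ℂ) (w : ℂ) :
    HasFDerivAt (term A m n g) (term A m n g w • Lmap A g) w := by
  by_cases hg : g = 0
  · have h0 : term A m n g = fun _ => (0 : ℂ) := funext fun w => by simp [term, hg]
    rw [h0]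
    exact (hasFDerivAt_const (0:ℂ) w).congr_fderiv (zero_smul ℂ (Lmap A g)).symm
  · set c := ((starRingEnd ℂ) g) ^ m * g ^ n with hc
    have h1 : HasFDerivAt (fun w : ℂ => Complex.exp (Lmap A g w))
        (Complex.exp (Lmap A g w) • Lmap A g) w := by
      have hexp := (Complex.hasDerivAt_exp (Lmap A g w)).hasFDerivAt.restrictScalars ℝ
      have hcomp := hexp.comp w (Lmap A g).hasFDerivAt
      refine hcomp.congr_fderiv ?_
      ext v
      simp [mul_comm]
    have h2 := h1.mul_const c⁻¹
    have heq : term A m n g = fun w => Complex.exp (Lmap A g w) * c⁻¹ :=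
      funext fun w => by rw [term, if_neg hg, Lmap_apply, div_eq_mul_inv]
    rw [heq]
    exact h2.congr_fderiv (by rw [smul_smul, mul_comm])

lemma norm_term (A : ℝ) (hA : 0 < A) (m n : ℤ) (g : ℂ) (w : ℂ) :
    ‖term A m n g w‖ = if g = 0 then 0 else ‖g‖ ^ (-((m : ℝ) + n)) := by
  by_cases hg : g = 0
  · simp [term, hg]
  · simp only [term, if_neg hg]
    rw [norm_div, norm_mul, norm_zpow, norm_zpow,
      Complex.norm_conj, Complex.norm_exp]
    have habs : ‖g‖ ≠ 0 := by simpa using hg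
    have hre : ((g * (starRingEnd ℂ) w - (starRingEnd ℂ) g * w) / (A : ℂ)).re = 0 := by
      have : (starRingEnd ℂ) g * w = (starRingEnd ℂ) (g * (starRingEnd ℂ) w) := by
        simp [map_mul]
      rw [this, Complex.div_re]
      simp [Complex.sub_re, Complex.conj_re, Complex.conj_im]
    rw [hre, Real.exp_zero]
    rw [← zpow_add₀ habs, ← Real.rpow_intCast, Int.cast_add]
    rw [Real.rpow_neg (by positivity), one_div]

lemma im_ne_zero_of_indep {ω₁ ω₂ : ℂ} (hindep : LinearIndependent ℝ ![ω₁, ω₂]) :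
    ((starRingEnd ℂ) ω₁ * ω₂).im ≠ 0 := by
  intro h
  have him : ω₁.re * ω₂.im - ω₁.im * ω₂.re = 0 := by
    simpa [Complex.mul_im, Complex.conj_re, Complex.conj_im, sub_eq_add_neg] using h
  have hpair := LinearIndependent.pair_iff.mp hindep
  have h1 : ω₂.im = 0 ∧ ω₁.im = 0 := by
    have := hpair ω₂.im (-ω₁.im) ?_
    · exact ⟨this.1, by simpa using this.2⟩
    · apply Complex.ext <;>
        simp [Complex.add_re, Complex.add_im, Complex.real_smul, Complex.ofReal_mul] <;> nlinarith
  have h2 : ω₂.re = 0 ∧ ω₁.re = 0 := by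
    have := hpair ω₂.re (-ω₁.re) ?_
    · exact ⟨this.1, by simpa using this.2⟩
    · apply Complex.ext <;>
        simp [Complex.add_re, Complex.add_im, Complex.real_smul, h1.1, h1.2] <;> nlinarith
  have : (1:ℝ) = 0 ∧ (0:ℝ) = 0 := hpair 1 0 (by
    apply Complex.ext <;> simp [h1.1, h1.2, h2.1, h2.2])
  exact one_ne_zero this.1

lemma A_pos {ω₁ ω₂ : ℂ} (hindep : LinearIndependent ℝ ![ω₁, ω₂]) :
    0 < |((starRingEnd ℂ) ω₁ * ω₂).im| / Real.pi :=
  div_pos (abs_pos.mpr (im_ne_zero_of_indep hindep)) Real.pi_pos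

-- lattice lower bound
lemma lattice_bound {ω₁ ω₂ : ℂ} (hindep : LinearIndependent ℝ ![ω₁, ω₂]) :
    ∃ K : ℝ, 0 < K ∧ ∀ p : ℤ × ℤ,
      ‖(![p.1, p.2] : Fin 2 → ℤ)‖ ≤ K * ‖(p.1 : ℂ) * ω₁ + (p.2 : ℂ) * ω₂‖ := by
  classical
  let T : (Fin 2 → ℝ) →ₗ[ℝ] ℂ :=
    (LinearMap.proj 0).smulRight ω₁ + (LinearMap.proj 1).smulRight ω₂
  have hT : ∀ v : Fin 2 → ℝ, T v = v 0 • ω₁ + v 1 • ω₂ := fun v => rfl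
  have hker : LinearMap.ker T = ⊥ := by
    rw [LinearMap.ker_eq_bot']
    intro v hv
    rw [hT] at hv
    obtain ⟨h0, h1⟩ := LinearIndependent.pair_iff.mp hindep _ _ hv
    funext i
    fin_cases i <;> simp [h0, h1]
  obtain ⟨K, hK, hanti⟩ := T.exists_antilipschitzWith hker
  refine ⟨K, hK, fun p => ?_⟩
  have hv : ∀ v : Fin 2 → ℝ, ‖v‖ ≤ K * ‖T v‖ := fun v => by
    simpa [dist_eq_norm, map_zero] using hanti.le_mul_dist v 0
  have key := hv ![(p.1 : ℝ), (p.2 : ℝ)]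
  have hTv : T ![(p.1 : ℝ), (p.2 : ℝ)] = (p.1 : ℂ) * ω₁ + (p.2 : ℂ) * ω₂ := by
    rw [hT]
    simp [Complex.real_smul]
  rw [hTv] at key
  have hnorm : ‖(![p.1, p.2] : Fin 2 → ℤ)‖ = ‖![(p.1 : ℝ), (p.2 : ℝ)]‖ := by
    rw [Pi.norm_def, Pi.norm_def]
    congr 1
  rw [hnorm]
  simpa using key

lemma summable_lattice {ω₁ ω₂ : ℂ} (hindep : LinearIndependent ℝ ![ω₁, ω₂]) {s : ℝ}
    (hs : 2 < s) :
    Summable (fun p : ℤ × ℤ => if (p.1 : ℂ) * ω₁ + (p.2 : ℂ) * ω₂ = 0 then (0:ℝ) else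
      ‖(p.1 : ℂ) * ω₁ + (p.2 : ℂ) * ω₂‖ ^ (-s)) := by
  obtain ⟨K, hK, hbound⟩ := lattice_bound hindep
  have hbase := EisensteinSeries.summable_one_div_norm_rpow hs
  have h2 : Summable (fun p : ℤ × ℤ => ‖(![p.1, p.2] : Fin 2 → ℤ)‖ ^ (-s)) := by
    have := (Equiv.summable_iff (finTwoArrowEquiv ℤ).symm).mpr hbase
    simpa [Function.comp_def] using this
  refine Summable.of_nonneg_of_le ?_ ?_ (h2.mul_left (K ^ s))
  · intro p
    split <;> positivity
  · intro p
    by_cases hg : (p.1 : ℂ) * ω₁ + (p.2 : ℂ) * ω₂ = 0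
    · rw [if_pos hg]
      positivity
    · rw [if_neg hg]
      have habs : 0 < ‖(p.1 : ℂ) * ω₁ + (p.2 : ℂ) * ω₂‖ := by
        simpa [AbsoluteValue.pos_iff] using hg
      have hvne : (![p.1, p.2] : Fin 2 → ℤ) ≠ 0 := by
        intro h
        apply hg
        have h0 : p.1 = 0 := by simpa using congrFun h 0
        have h1 : p.2 = 0 := by simpa using congrFun h 1
        simp [h0, h1]
      have hvpos : 0 < ‖(![p.1, p.2] : Fin 2 → ℤ)‖ := norm_pos_iff.mpr hvne
      have key : ‖(![p.1, p.2] : Fin 2 → ℤ)‖ / K ≤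
          ‖(p.1 : ℂ) * ω₁ + (p.2 : ℂ) * ω₂‖ :=
        (div_le_iff₀ hK).mpr (by rw [mul_comm]; exact hbound p)
      calc ‖(p.1 : ℂ) * ω₁ + (p.2 : ℂ) * ω₂‖ ^ (-s)
          ≤ (‖(![p.1, p.2] : Fin 2 → ℤ)‖ / K) ^ (-s) :=
            Real.rpow_le_rpow_of_nonpos (by positivity) key (by linarith)
        _ = K ^ s * ‖(![p.1, p.2] : Fin 2 → ℤ)‖ ^ (-s) := by
            rw [Real.div_rpow hvpos.le hK.le, Real.rpow_neg hvpos.le, Real.rpow_neg hK.le]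
            field_simp

lemma pointwise1 {A : ℝ} (hA : (A:ℂ) ≠ 0) (m n : ℤ) (g z : ℂ) :
    (term A m n g z * Lmap A g 1 - Complex.I * (term A m n g z * Lmap A g Complex.I)) / 2
      = -(term A (m-1) n g z) / (A : ℂ) := by
  by_cases hg : g = 0
  · simp [term, hg]
  · have hgc : (starRingEnd ℂ) g ≠ 0 := by simpa using hg
    have hzp : (starRingEnd ℂ) g ^ m = (starRingEnd ℂ) g ^ (m-1) * (starRingEnd ℂ) g := by
      rw [zpow_sub_one₀ hgc, mul_assoc, inv_mul_cancel₀ hgc, mul_one]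
    rw [Lmap_apply, Lmap_apply]
    rw [term, term, if_neg hg, if_neg hg, hzp]
    simp only [map_one, Complex.conj_I, mul_one]
    set X := (starRingEnd ℂ) g ^ (m-1) with hXdef
    set Y := g ^ n with hYdef
    have hX : X ≠ 0 := zpow_ne_zero _ hgc
    have hY : Y ≠ 0 := zpow_ne_zero _ hg
    set e := Complex.exp ((g * (starRingEnd ℂ) z - (starRingEnd ℂ) g * z) / (A : ℂ)) with hedef
    field_simp
    ring_nf
    rw [Complex.I_sq]
    field_simp
    ring

lemma pointwise2 {A : ℝ} (hA : (A:ℂ) ≠ 0) (m n : ℤ) (g z : ℂ) :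
    (term A m n g z * Lmap A g 1 + Complex.I * (term A m n g z * Lmap A g Complex.I)) / 2
      = term A m (n-1) g z / (A : ℂ) := by
  by_cases hg : g = 0
  · simp [term, hg]
  · have hgc : (starRingEnd ℂ) g ≠ 0 := by simpa using hg
    have hzp : g ^ n = g ^ (n-1) * g := by
      rw [zpow_sub_one₀ hg, mul_assoc, inv_mul_cancel₀ hg, mul_one]
    rw [Lmap_apply, Lmap_apply]
    rw [term, term, if_neg hg, if_neg hg, hzp]
    simp only [map_one, Complex.conj_I, mul_one]
    set X := (starRingEnd ℂ) g ^ m with hXdef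
    set Y := g ^ (n-1) with hYdef
    have hX : X ≠ 0 := zpow_ne_zero _ hgc
    have hY : Y ≠ 0 := zpow_ne_zero _ hg
    set e := Complex.exp ((g * (starRingEnd ℂ) z - (starRingEnd ℂ) g * z) / (A : ℂ)) with hedef
    field_simp
    ring_nf
    rw [Complex.I_sq]
    field_simp
    ring

/-- the Eisenstein–Kronecker series
`E_{m,n}(z) = ∑_{γ ∈ Γ∖{0}} χ_z(γ)/(γ̄^m γ^n)` satisfies, for `m + n > 3` and
`z ∉ Γ`, the Wirtinger differential equations `∂_z E_{m,n} = −E_{m−1,n}/A` and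
`∂_z̄ E_{m,n} = E_{m,n−1}/A`. -/
theorem stmt_2 (ω₁ ω₂ : ℂ) (hindep : LinearIndependent ℝ ![ω₁, ω₂])
    (A : ℝ) (hA : A = |((starRingEnd ℂ) ω₁ * ω₂).im| / Real.pi)
    (E : ℤ → ℤ → ℂ → ℂ)
    (hE : ∀ (m n : ℤ) (z : ℂ), E m n z =
      ∑' p : ℤ × ℤ,
        if ((p.1 : ℂ) * ω₁ + (p.2 : ℂ) * ω₂) = 0 then 0 else
          Complex.exp ((((p.1 : ℂ) * ω₁ + (p.2 : ℂ) * ω₂) * (starRingEnd ℂ) z -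
              (starRingEnd ℂ) ((p.1 : ℂ) * ω₁ + (p.2 : ℂ) * ω₂) * z) / (A : ℂ)) /
            (((starRingEnd ℂ) ((p.1 : ℂ) * ω₁ + (p.2 : ℂ) * ω₂)) ^ m *
              ((p.1 : ℂ) * ω₁ + (p.2 : ℂ) * ω₂) ^ n))
    (m n : ℤ) (hmn : 3 < m + n)
    (z : ℂ) (hz : ∀ p : ℤ × ℤ, z ≠ (p.1 : ℂ) * ω₁ + (p.2 : ℂ) * ω₂) :
    (fderiv ℝ (E m n) z 1 - Complex.I * fderiv ℝ (E m n) z Complex.I) / 2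
        = -(E (m - 1) n z) / (A : ℂ) ∧
    (fderiv ℝ (E m n) z 1 + Complex.I * fderiv ℝ (E m n) z Complex.I) / 2
        = E m (n - 1) z / (A : ℂ) := by
  have hApos : 0 < A := hA ▸ A_pos hindep
  have hAne : (A : ℂ) ≠ 0 := Complex.ofReal_ne_zero.mpr (ne_of_gt hApos)
  have hmnR : (3:ℝ) < (m:ℝ) + n := by exact_mod_cast hmn
  have hs1 : (2:ℝ) < (m:ℝ) + n - 1 := by linarith
  have hs2 : (2:ℝ) < (m:ℝ) + n := by linarith
  set g : ℤ × ℤ → ℂ := fun p => (p.1 : ℂ) * ω₁ + (p.2 : ℂ) * ω₂ with hgdef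
  set u : ℤ × ℤ → ℝ := fun p =>
    (2/A) * (if g p = 0 then 0 else ‖g p‖ ^ (-((m:ℝ) + n - 1))) with hudef
  have hu : Summable u := Summable.mul_left _ (summable_lattice hindep hs1)
  have hbound : ∀ (p : ℤ × ℤ) (w : ℂ), ‖term A m n (g p) w • Lmap A (g p)‖ ≤ u p := by
    intro p w
    rw [norm_smul (term A m n (g p) w) (Lmap A (g p)), norm_term A hApos]
    by_cases hgp : g p = 0
    · simp [hudef, hgp]
    · rw [if_neg hgp, hudef]
      simp only [if_neg hgp]
      have habs : 0 < ‖g p‖ := by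
        simpa [AbsoluteValue.pos_iff] using hgp
      calc ‖g p‖ ^ (-((m:ℝ) + n)) * ‖Lmap A (g p)‖
          ≤ ‖g p‖ ^ (-((m:ℝ) + n)) * (2 * ‖g p‖ / A) := by
            exact mul_le_mul_of_nonneg_left (Lmap_norm_le A hApos.le _) (by positivity)
        _ = 2/A * ‖g p‖ ^ (-((m:ℝ) + n - 1)) := by
            rw [show -((m:ℝ) + n - 1) = -((m:ℝ) + n) + 1 by ring,
              Real.rpow_add habs, Real.rpow_one]
            ring
  have hf0 : Summable fun p => term A m n (g p) z := by
    refine Summable.of_norm_bounded (summable_lattice hindep hs2) fun p => le_of_eq ?_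
    rw [norm_term A hApos]
  have key : HasFDerivAt (fun w => ∑' p, term A m n (g p) w)
      (∑' p, term A m n (g p) z • Lmap A (g p)) z :=
    hasFDerivAt_tsum hu (fun p w => hasFDerivAt_term A m n (g p) w)
      (fun p w => hbound p w) hf0 z
  have hEeq : E m n = fun w => ∑' p, term A m n (g p) w := by
    funext w
    rw [hE m n w]
    exact tsum_congr fun p => by rw [term]
  have key' : HasFDerivAt (E m n) (∑' p, term A m n (g p) z • Lmap A (g p)) z := by
    rw [hEeq]; exact key
  have hS : Summable fun p => term A m n (g p) z • Lmap A (g p) :=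
    Summable.of_norm_bounded hu fun p => hbound p z
  have happly : ∀ v : ℂ, fderiv ℝ (E m n) z v =
      ∑' p, term A m n (g p) z * Lmap A (g p) v := by
    intro v
    rw [key'.fderiv]
    have h := (ContinuousLinearMap.apply ℝ ℂ v).map_tsum hS
    simpa using h
  have hSv : ∀ v : ℂ, Summable fun p => term A m n (g p) z * Lmap A (g p) v := by
    intro v
    have h := hS.mapL (ContinuousLinearMap.apply ℝ ℂ v)
    simpa using h
  constructor
  · rw [happly 1, happly Complex.I, ← tsum_mul_left,
      ← Summable.tsum_sub (hSv 1) ((hSv Complex.I).mul_left Complex.I), ← tsum_div_const,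
      hE (m-1) n z]
    have hG : (∑' (p : ℤ × ℤ),
        if ((p.1 : ℂ) * ω₁ + (p.2 : ℂ) * ω₂) = 0 then 0 else
          Complex.exp ((((p.1 : ℂ) * ω₁ + (p.2 : ℂ) * ω₂) * (starRingEnd ℂ) z -
              (starRingEnd ℂ) ((p.1 : ℂ) * ω₁ + (p.2 : ℂ) * ω₂) * z) / (A : ℂ)) /
            (((starRingEnd ℂ) ((p.1 : ℂ) * ω₁ + (p.2 : ℂ) * ω₂)) ^ (m-1) *
              ((p.1 : ℂ) * ω₁ + (p.2 : ℂ) * ω₂) ^ n)) =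
        ∑' p, term A (m-1) n (g p) z := tsum_congr fun p => by rw [term]
    rw [hG, ← tsum_neg, ← tsum_div_const]
    exact tsum_congr fun p => pointwise1 hAne m n (g p) z
  · rw [happly 1, happly Complex.I, ← tsum_mul_left,
      ← Summable.tsum_add (hSv 1) ((hSv Complex.I).mul_left Complex.I), ← tsum_div_const,
      hE m (n-1) z]
    have hG : (∑' (p : ℤ × ℤ),
        if ((p.1 : ℂ) * ω₁ + (p.2 : ℂ) * ω₂) = 0 then 0 else
          Complex.exp ((((p.1 : ℂ) * ω₁ + (p.2 : ℂ) * ω₂) * (starRingEnd ℂ) z -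
              (starRingEnd ℂ) ((p.1 : ℂ) * ω₁ + (p.2 : ℂ) * ω₂) * z) / (A : ℂ)) /
            (((starRingEnd ℂ) ((p.1 : ℂ) * ω₁ + (p.2 : ℂ) * ω₂)) ^ m *
              ((p.1 : ℂ) * ω₁ + (p.2 : ℂ) * ω₂) ^ (n-1))) =
        ∑' p, term A m (n-1) (g p) z := tsum_congr fun p => by rw [term]
    rw [hG, ← tsum_div_const]
    exact tsum_congr fun p => pointwise2 hAne m n (g p) z
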